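/- Let g ∈ S_n with n ≥ 2 and let w ≥ 2n be an integer with w ≡ (number of transpositions in any factorization of g) mod 2, i.e. (−1)^w = sgn(g). Then there exists a sequence of w transpositions (τ_1,...,τ_w) in S_n whose product is g, whose entries generate S_n, and whose last two entries are equal (τ_{w−1} = τ_w). -/

import Mathlib

open Equiv Equiv.Perm

/-- Any permutation is a product of at most `#support` swaps. -/
lemma exists_swap_list {α : Type*} [DecidableEq α] [Fintype α] (g : Equiv.Perm α) :
    ∃ l : List (Equiv.Perm α), l.prod = g ∧ (∀ x ∈ l, x.IsSwap) ∧
      l.length ≤ g.support.card := by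
  generalize hk : g.support.card = k
  induction k using Nat.strong_induction_on generalizing g with
  | _ k ih =>
    rcases eq_or_ne g 1 with rfl | hg
    · exact ⟨[], by simp, by simp, by simp⟩
    · obtain ⟨x, hx⟩ : ∃ x, g x ≠ x := by
        by_contra h
        push_neg at h
        exact hg (Equiv.ext h)
      have hlt : (Equiv.swap x (g x) * g).support.card < k := by
        rw [← hk]; exact Equiv.Perm.card_support_swap_mul hx
      obtain ⟨l, hl1, hl2, hl3⟩ := ih _ hlt (Equiv.swap x (g x) * g) rfl
      refine ⟨Equiv.swap x (g x) :: l, ?_, ?_, ?_⟩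
      · rw [List.prod_cons, hl1, ← mul_assoc, Equiv.swap_mul_self, one_mul]
      · intro y hy
        rcases List.mem_cons.mp hy with rfl | hy
        · exact ⟨x, g x, Ne.symm hx, rfl⟩
        · exact hl2 y hy
      · simp only [List.length_cons]
        omega

/-- For `g ∈ S_n`, `n ≥ 2`, and `w ≥ 2n` with `(-1)^w = sgn(g)`, there is a length-`w`
sequence of transpositions with product `g`, generating `S_n`, whose last two entries
are equal. -/
theorem factorization_with_repeated_last_pair (n : ℕ) (hn : 2 ≤ n)
    (g : Equiv.Perm (Fin n)) (w : ℕ) (hw : 2 * n ≤ w)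
    (hsgn : Equiv.Perm.sign g = (-1 : ℤˣ) ^ w) :
    ∃ (l0 : List (Equiv.Perm (Fin n))) (τ : Equiv.Perm (Fin n)),
      (l0 ++ [τ, τ]).length = w ∧
      (∀ x ∈ l0 ++ [τ, τ], x.IsSwap) ∧
      (l0 ++ [τ, τ]).prod = g ∧
      Subgroup.closure {x | x ∈ l0 ++ [τ, τ]} = ⊤ := by
  obtain ⟨m, rfl⟩ : ∃ m, n = m + 1 := ⟨n - 1, by omega⟩
  -- the adjacent-swap list
  set Ladj : List (Equiv.Perm (Fin (m + 1))) :=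
    (List.finRange m).map (fun i => Equiv.swap i.castSucc i.succ) with hLadj
  have hLadjswap : ∀ x ∈ Ladj, Equiv.Perm.IsSwap x := by
    intro x hx
    rw [hLadj, List.mem_map] at hx
    obtain ⟨i, _, rfl⟩ := hx
    exact ⟨i.castSucc, i.succ, (Fin.castSucc_lt_succ (i := i)).ne, rfl⟩
  have hLadjlen : Ladj.length = m := by simp [hLadj]
  -- factor g * (Ladj.prod)⁻¹
  obtain ⟨l₁, hl₁prod, hl₁swap, hl₁len⟩ := exists_swap_list (g * (Ladj.prod)⁻¹)
  have hl₁len' : l₁.length ≤ m + 1 := by simpa using hl₁len.trans (Finset.card_le_univ _)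
  -- parity
  have hsign1 : (-1 : ℤˣ) ^ l₁.length = (-1 : ℤˣ) ^ (w + m) := by
    have h1 := Equiv.Perm.sign_prod_list_swap hl₁swap
    have h2 := Equiv.Perm.sign_prod_list_swap hLadjswap
    rw [hl₁prod, map_mul, map_inv, hsgn, h2, hLadjlen] at h1
    rw [← h1, pow_add]
    congr 1
  have hpar : l₁.length % 2 = (w + m) % 2 := by
    have h := hsign1
    rw [← Nat.div_add_mod l₁.length 2, ← Nat.div_add_mod (w + m) 2, pow_add, pow_add,
      pow_mul, pow_mul] at h
    simp only [neg_one_sq, one_pow, one_mul] at h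
    rcases Nat.mod_two_eq_zero_or_one l₁.length with ha | ha <;>
      rcases Nat.mod_two_eq_zero_or_one (w + m) with hb | hb <;>
      rw [ha, hb] at h ⊢ <;> first | rfl | (exfalso; revert h; decide)
  have hm1 : 1 ≤ m := by omega
  -- budget
  have hbudget : l₁.length + (m + 2) ≤ w := by omega
  set pad := w - l₁.length - (m + 2) with hpad
  have hpadeven : pad % 2 = 0 := by omega
  set τ : Equiv.Perm (Fin (m + 1)) := Equiv.swap 0 1 with hτ
  have h01 : (0 : Fin (m + 1)) ≠ 1 := by
    simp [Fin.ext_iff, Fin.val_one']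
    omega
  have hτswap : τ.IsSwap := ⟨0, 1, h01, rfl⟩
  have hτsq : τ * τ = 1 := Equiv.swap_mul_self _ _
  obtain ⟨q, hq⟩ : ∃ q, pad = 2 * q := ⟨pad / 2, by omega⟩
  have hrep : (List.replicate pad τ).prod = 1 := by
    rw [List.prod_replicate, hq, pow_mul, sq, hτsq, one_pow]
  refine ⟨l₁ ++ List.replicate pad τ ++ Ladj, τ, ?_, ?_, ?_, ?_⟩
  · simp only [List.length_append, List.length_replicate, hLadjlen, List.length_cons,
      List.length_nil]
    omega
  · intro x hx
    simp only [List.mem_append, List.mem_replicate, List.mem_cons, List.not_mem_nil] at hx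
    rcases hx with ((h | h) | h) | h | h | h
    · exact hl₁swap x h
    · rw [h.2]; exact hτswap
    · exact hLadjswap x h
    · rw [h]; exact hτswap
    · rw [h]; exact hτswap
    · exact h.elim
  · rw [List.prod_append, List.prod_append, List.prod_append, hrep, hl₁prod]
    simp [hτsq, mul_assoc]
  · apply Subgroup.closure_eq_top_of_mclosure_eq_top
    apply top_unique
    rw [← Equiv.Perm.mclosure_swap_castSucc_succ m, Submonoid.closure_le]
    rintro _ ⟨i, rfl⟩
    apply Submonoid.subset_closure
    simp only [Set.mem_setOf_eq, List.mem_append]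
    left; right
    rw [hLadj, List.mem_map]
    exact ⟨i, List.mem_finRange i, rfl⟩
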